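/- Let R be a commutative Noetherian local ring, let M and N be finitely generated R-modules, and fix a resolution ⋯ → F_2 → F_1 → F_0 → M → 0 of M by finite free R-modules. Suppose Ext^i_R(M,R) = 0 for all i ≥ 1. Then for all integers u ≥ v ≥ 1 and all j ≥ 1 one has Ext^j_R(Tr Ω^{u−v} M, N) ≅ Ext^{j+v}_R(Tr Ω^{u} M, N). -/

import Mathlib

open CategoryTheory

/-- The `i`-th Ext module `Ext^i_R(X, Y)` of two `R`-modules. -/
noncomputable abbrev extMod (R : Type) [CommRing R] (i : ℕ)
    (X : Type) [AddCommGroup X] [Module R X]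
    (Y : Type) [AddCommGroup Y] [Module R Y] : Type :=
  ((Ext R (ModuleCat R) i).obj (Opposite.op (ModuleCat.of R X))).obj (ModuleCat.of R Y)

/-- A resolution `⋯ → F_2 → F_1 → F_0 → M → 0` of `M` by finite free `R`-modules. -/
structure FiniteFreeResolution (R : Type) [CommRing R]
    (M : Type) [AddCommGroup M] [Module R M] where
  F : ℕ → Type
  [addCommGroup : ∀ n, AddCommGroup (F n)]
  [module : ∀ n, Module R (F n)]
  free : ∀ n, Module.Free R (F n)
  finite : ∀ n, Module.Finite R (F n)
  d : ∀ n, F (n + 1) →ₗ[R] F n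
  ε : F 0 →ₗ[R] M
  surj : Function.Surjective ε
  exact_at_zero : Function.Exact (d 0) ε
  exact_at : ∀ n, Function.Exact (d (n + 1)) (d n)

attribute [instance] FiniteFreeResolution.addCommGroup FiniteFreeResolution.module

/-- `Tr Ω^n M`: the transpose of the `n`-th syzygy of `M` with respect to the given
finite free resolution, i.e. the cokernel of the dual map `F_n^* → F_{n+1}^*`.
(For `n = 0` this is the transpose `Tr M` of `M` itself.) -/
abbrev FiniteFreeResolution.trSyzygy {R : Type} [CommRing R] {M : Type}
    [AddCommGroup M] [Module R M] (res : FiniteFreeResolution R M) (n : ℕ) : Type :=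
  Module.Dual R (res.F (n + 1)) ⧸ LinearMap.range (res.d n).dualMap

namespace ExtShiftAux

variable {R : Type} [CommRing R]

lemma projective_of_module_free (X : Type) [AddCommGroup X] [Module R X] [Module.Free R X] :
    Projective (ModuleCat.of R X) :=
  ModuleCat.projective_of_free (Module.Free.chooseBasis R X)

/-! ### Chain complex from linear data -/

noncomputable def cxOf (P : ℕ → Type) [∀ n, AddCommGroup (P n)] [∀ n, Module R (P n)]
    (d : ∀ n, P (n+1) →ₗ[R] P n) (hd : ∀ n x, d n (d (n+1) x) = 0) :
    ChainComplex (ModuleCat R) ℕ :=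
  ChainComplex.of (fun n => ModuleCat.of R (P n)) (fun n => ModuleCat.ofHom (d n))
    (fun n => by ext x; exact hd n x)

lemma cxOf_d (P : ℕ → Type) [∀ n, AddCommGroup (P n)] [∀ n, Module R (P n)]
    (d : ∀ n, P (n+1) →ₗ[R] P n) (hd : ∀ n x, d n (d (n+1) x) = 0) (n : ℕ) :
    (cxOf P d hd).d (n+1) n = ModuleCat.ofHom (d n) := by
  unfold cxOf
  exact ChainComplex.of_d (fun n => ModuleCat.of R (P n)) (fun n => ModuleCat.ofHom (d n)) n

lemma cxOf_yoneda_d (P : ℕ → Type) [∀ n, AddCommGroup (P n)] [∀ n, Module R (P n)]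
    (d : ∀ n, P (n+1) →ₗ[R] P n) (hd : ∀ n x, d n (d (n+1) x) = 0)
    (N : Type) [AddCommGroup N] [Module R N] (m : ℕ)
    (f : ModuleCat.of R (P m) ⟶ ModuleCat.of R N) :
    (((cxOf P d hd).linearYonedaObj R (ModuleCat.of R N)).d m (m+1)).hom f
      = ModuleCat.ofHom (f.hom ∘ₗ d m) := by
  rw [ChainComplex.linearYonedaObj_d, cxOf_d]
  rfl

/-! ### Projective resolution from linear data -/

section
variable {M₀ : Type} [AddCommGroup M₀] [Module R M₀]
  (P : ℕ → Type) [∀ n, AddCommGroup (P n)] [∀ n, Module R (P n)]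
  (d : ∀ n, P (n+1) →ₗ[R] P n)
  (ε : P 0 →ₗ[R] M₀)
  (h0 : Function.Exact (d 0) ε)
  (hex : ∀ n, Function.Exact (d (n+1)) (d n))

include ε h0 hex in
noncomputable def piOf : cxOf P d (fun n x => ((hex n).apply_apply_eq_zero x)) ⟶
    (ChainComplex.single₀ (ModuleCat R)).obj (ModuleCat.of R M₀) :=
  (ChainComplex.toSingle₀Equiv _ _).symm ⟨ModuleCat.ofHom ε, by
    rw [cxOf_d]
    ext x
    exact h0.apply_apply_eq_zero x⟩

lemma piOf_f_zero : (piOf P d ε h0 hex).f 0 = ModuleCat.ofHom ε :=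
  ChainComplex.toSingle₀Equiv_symm_apply_f_zero _ _

variable (hproj : ∀ n, Projective (ModuleCat.of R (P n))) (hsurj : Function.Surjective ε)

include ε h0 hex hproj hsurj in
noncomputable def resolutionOf : ProjectiveResolution (ModuleCat.of R M₀) where
  complex := cxOf P d (fun n x => ((hex n).apply_apply_eq_zero x))
  projective := hproj
  π := piOf P d ε h0 hex
  quasiIso := ⟨fun n => by
    cases n with
    | zero =>
      rw [ChainComplex.quasiIsoAt₀_iff, ShortComplex.quasiIso_iff_of_zeros']
      · constructor
        · rw [ShortComplex.moduleCat_exact_iff_range_eq_ker]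
          dsimp [HomologicalComplex.sc', HomologicalComplex.shortComplexFunctor']
          rw [piOf_f_zero, cxOf_d]
          exact h0.linearMap_ker_eq.symm
        · dsimp only [HomologicalComplex.shortComplexFunctor']
          rw [piOf_f_zero]
          exact (ModuleCat.epi_iff_surjective _).2 hsurj
      all_goals rfl
    | succ n =>
      rw [quasiIsoAt_iff_exactAt']
      · rw [HomologicalComplex.exactAt_iff' _ (n+2) (n+1) n (by simp) (by simp),
          ShortComplex.moduleCat_exact_iff_range_eq_ker]
        dsimp [HomologicalComplex.sc', HomologicalComplex.shortComplexFunctor']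
        rw [cxOf_d, cxOf_d]
        exact (hex n).linearMap_ker_eq.symm
      · apply ChainComplex.exactAt_succ_single_obj⟩

include ε h0 hex hproj hsurj in
/-- Ext computed by the resolution -/
noncomputable def extIso (N : Type) [AddCommGroup N] [Module R N] (i : ℕ) :
    ((Ext R (ModuleCat R) i).obj (Opposite.op (ModuleCat.of R M₀))).obj (ModuleCat.of R N) ≅
      ((cxOf P d (fun n x => ((hex n).apply_apply_eq_zero x))).linearYonedaObj R
        (ModuleCat.of R N)).homology i :=
  (resolutionOf P d ε h0 hex hproj hsurj).isoExt i (ModuleCat.of R N)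

include ε h0 hex hproj hsurj in
/-- Vanishing of Ext gives exactness of the dual complex. -/
lemma exact_lcomp_of_subsingleton_ext (N : Type) [AddCommGroup N] [Module R N] (m : ℕ)
    (hsub : Subsingleton (((Ext R (ModuleCat R) (m+1)).obj
      (Opposite.op (ModuleCat.of R M₀))).obj (ModuleCat.of R N))) :
    Function.Exact (LinearMap.lcomp R N (d m)) (LinearMap.lcomp R N (d (m+1))) := by
  set K := (cxOf P d (fun n x => ((hex n).apply_apply_eq_zero x))).linearYonedaObj R
    (ModuleCat.of R N) with hK
  have hzero : Limits.IsZero (K.homology (m+1)) := by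
    haveI := hsub
    exact (ModuleCat.isZero_of_subsingleton _).of_iso
      (extIso P d ε h0 hex hproj hsurj N (m+1)).symm
  have hexact : K.ExactAt (m+1) := (HomologicalComplex.exactAt_iff_isZero_homology _ _).2 hzero
  rw [HomologicalComplex.exactAt_iff' _ m (m+1) (m+2) (by simp) (by simp),
    ShortComplex.moduleCat_exact_iff_range_eq_ker] at hexact
  rw [LinearMap.exact_iff]
  have e1 : ∀ f, (K.d m (m+1)).hom f = ModuleCat.ofHom (f.hom ∘ₗ d m) :=
    cxOf_yoneda_d P d _ N m
  have e2 : ∀ f, (K.d (m+1) (m+2)).hom f = ModuleCat.ofHom (f.hom ∘ₗ d (m+1)) :=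
    cxOf_yoneda_d P d _ N (m+1)
  dsimp [HomologicalComplex.sc', HomologicalComplex.shortComplexFunctor'] at hexact
  ext g
  change LinearMap.range (K.d m (m+1)).hom = LinearMap.ker (K.d (m+1) (m+2)).hom at hexact
  have h := SetLike.ext_iff.1 hexact
  specialize h (ModuleCat.ofHom g)
  simp only [LinearMap.mem_ker, LinearMap.mem_range]
  constructor
  · intro hg
    obtain ⟨y, hy⟩ := LinearMap.mem_range.1
      (h.2 (LinearMap.mem_ker.2 ((e2 _).trans (ModuleCat.hom_ext (LinearMap.ext fun x => LinearMap.congr_fun hg x)))))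
    exact ⟨y.hom, congrArg ModuleCat.Hom.hom ((e1 y).symm.trans hy)⟩
  · rintro ⟨y, hy⟩
    have h1 := (e2 _).symm.trans (LinearMap.mem_ker.1 (h.1 (LinearMap.mem_range.2
      ⟨ModuleCat.ofHom y, (e1 _).trans (ModuleCat.hom_ext (LinearMap.ext fun x => LinearMap.congr_fun hy x))⟩)))
    ext x
    exact LinearMap.congr_fun (congrArg ModuleCat.Hom.hom h1) x

end


/-! ### Shift-by-one isomorphism -/

section Shift
variable {A B : Type} [AddCommGroup A] [Module R A] [AddCommGroup B] [Module R B]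
  (Q : ℕ → Type) [∀ n, AddCommGroup (Q n)] [∀ n, Module R (Q n)]
  (dQ : ∀ n, Q (n+1) →ₗ[R] Q n)
  (εB : Q 0 →ₗ[R] B) (h0B : Function.Exact (dQ 0) εB)
  (hexB : ∀ n, Function.Exact (dQ (n+1)) (dQ n))
  (hprojQ : ∀ n, Projective (ModuleCat.of R (Q n)))
  (hsurjB : Function.Surjective εB)
  (εA : Q 1 →ₗ[R] A) (h0A : Function.Exact (dQ 1) εA)
  (hsurjA : Function.Surjective εA)

include h0B hexB hprojQ hsurjB h0A hsurjA in
noncomputable def extShiftIso (N : Type) [AddCommGroup N] [Module R N] (m : ℕ) :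
    ((Ext R (ModuleCat R) (m+1)).obj (Opposite.op (ModuleCat.of R A))).obj (ModuleCat.of R N) ≅
    ((Ext R (ModuleCat R) (m+2)).obj (Opposite.op (ModuleCat.of R B))).obj (ModuleCat.of R N) := by
  have hexA : ∀ n, Function.Exact ((fun k => dQ (k+1)) (n+1)) ((fun k => dQ (k+1)) n) :=
    fun n => hexB (n+1)
  let KA := (cxOf (fun k => Q (k+1)) (fun k => dQ (k+1))
    (fun n x => ((hexA n).apply_apply_eq_zero x))).linearYonedaObj R (ModuleCat.of R N)
  let KB := (cxOf Q dQ
    (fun n x => ((hexB n).apply_apply_eq_zero x))).linearYonedaObj R (ModuleCat.of R N)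
  have iA : ((Ext R (ModuleCat R) (m+1)).obj (Opposite.op (ModuleCat.of R A))).obj
      (ModuleCat.of R N) ≅ KA.homology (m+1) :=
    extIso (fun k => Q (k+1)) (fun k => dQ (k+1)) εA h0A hexA (fun n => hprojQ (n+1)) hsurjA N (m+1)
  have iB : ((Ext R (ModuleCat R) (m+2)).obj (Opposite.op (ModuleCat.of R B))).obj
      (ModuleCat.of R N) ≅ KB.homology (m+2) :=
    extIso Q dQ εB h0B hexB hprojQ hsurjB N (m+2)
  refine iA ≪≫ ?_ ≪≫ iB.symm
  refine ShortComplex.homologyMapIso (KA.isoSc' m (m+1) (m+2) (by simp) (by simp)) ≪≫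
    ?_ ≪≫ (ShortComplex.homologyMapIso (KB.isoSc' (m+1) (m+2) (m+3) (by simp) (by simp))).symm
  refine ShortComplex.homologyMapIso (S₁ := KA.sc' m (m+1) (m+2))
    (S₂ := KB.sc' (m+1) (m+2) (m+3))
    (ShortComplex.isoMk (Iso.refl _) (Iso.refl _) (Iso.refl _) ?_ ?_)
  · dsimp [HomologicalComplex.sc']
    ext f
    change (KB.d (m+1) (m+2)).hom f = (KA.d m (m+1)).hom f
    exact ((show ∀ f, (KB.d (m+1) (m+2)).hom f = ModuleCat.ofHom (f.hom ∘ₗ dQ (m+1)) from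
        cxOf_yoneda_d Q dQ _ N (m+1)) f).trans
      ((show ∀ f, (KA.d m (m+1)).hom f = ModuleCat.ofHom (f.hom ∘ₗ dQ (m+1)) from
        cxOf_yoneda_d (fun k => Q (k+1)) (fun k => dQ (k+1)) _ N m) f).symm
  · dsimp [HomologicalComplex.sc']
    ext f
    change (KB.d (m+2) (m+3)).hom f = (KA.d (m+1) (m+2)).hom f
    exact ((show ∀ f, (KB.d (m+2) (m+3)).hom f = ModuleCat.ofHom (f.hom ∘ₗ dQ (m+2)) from
        cxOf_yoneda_d Q dQ _ N (m+2)) f).trans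
      ((show ∀ f, (KA.d (m+1) (m+2)).hom f = ModuleCat.ofHom (f.hom ∘ₗ dQ (m+2)) from
        cxOf_yoneda_d (fun k => Q (k+1)) (fun k => dQ (k+1)) _ N (m+1)) f).symm

end Shift

/-! ### A free resolution of an arbitrary module -/

section FreeRes
variable (R) (K : Type) [AddCommGroup K] [Module R K]

noncomputable def km : ℕ → ModuleCat R
  | 0 => ModuleCat.of R K
  | n+1 => ModuleCat.of R
      (LinearMap.ker (Finsupp.linearCombination R (id : km n → km n)))

abbrev qmod (n : ℕ) : Type := km R K n →₀ R

noncomputable def qe (n : ℕ) : qmod R K n →ₗ[R] km R K n :=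
  Finsupp.linearCombination R id

lemma qe_surj (n : ℕ) : Function.Surjective (qe R K n) :=
  Finsupp.linearCombination_id_surjective R _

noncomputable def qd (n : ℕ) : qmod R K (n+1) →ₗ[R] qmod R K n :=
  (LinearMap.ker (qe R K n)).subtype ∘ₗ (qe R K (n+1))

lemma range_qd (n : ℕ) : LinearMap.range (qd R K n) = LinearMap.ker (qe R K n) := by
  erw [qd, LinearMap.range_comp, LinearMap.range_eq_top.2 (qe_surj R K (n+1)),
    Submodule.map_top, Submodule.range_subtype]

lemma ker_qd (n : ℕ) : LinearMap.ker (qd R K n) = LinearMap.ker (qe R K (n+1)) := by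
  erw [qd, LinearMap.ker_comp, Submodule.ker_subtype, Submodule.comap_bot]
  rfl

lemma exact_qd_qe (n : ℕ) : Function.Exact (qd R K n) (qe R K n) :=
  LinearMap.exact_iff.2 (range_qd R K n).symm

lemma exact_qd_qd (n : ℕ) : Function.Exact (qd R K (n+1)) (qd R K n) :=
  LinearMap.exact_iff.2 (by rw [ker_qd, range_qd])

lemma proj_qmod (n : ℕ) : Projective (ModuleCat.of R (qmod R K n)) :=
  ModuleCat.projective_of_free Finsupp.basisSingleOne

end FreeRes

/-! ### The spliced dual resolution -/

section Splice
variable {M : Type} [AddCommGroup M] [Module R M] (res : FiniteFreeResolution R M)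

abbrev G (n : ℕ) : Type := Module.Dual R (res.F n)

noncomputable def delta (n : ℕ) : G res n →ₗ[R] G res (n+1) := (res.d n).dualMap

abbrev KK : Type := LinearMap.ker (delta res 0)

noncomputable def bb : ℕ → Type
  | 0 => G res 0
  | k+1 => qmod R (KK res) k

noncomputable instance bbAcg : ∀ k, AddCommGroup (bb res k)
  | 0 => inferInstanceAs (AddCommGroup (G res 0))
  | k+1 => inferInstanceAs (AddCommGroup (qmod R (KK res) k))

noncomputable instance bbMod : ∀ k, Module R (bb res k)
  | 0 => inferInstanceAs (Module R (G res 0))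
  | k+1 => inferInstanceAs (Module R (qmod R (KK res) k))

noncomputable def dbb : ∀ k, bb res (k+1) →ₗ[R] bb res k
  | 0 => (LinearMap.ker (delta res 0)).subtype ∘ₗ qe R (KK res) 0
  | k+1 => qd R (KK res) k

noncomputable def S : ℕ → ℕ → Type
  | 0 => fun n => G res (n+1)
  | k+1 => fun n => match n with
    | 0 => bb res k
    | n+1 => S k n

noncomputable instance SAcg : ∀ k n, AddCommGroup (S res k n)
  | 0, n => inferInstanceAs (AddCommGroup (G res (n+1)))
  | k+1, 0 => inferInstanceAs (AddCommGroup (bb res k))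
  | k+1, n+1 => SAcg k n

noncomputable instance SMod : ∀ k n, Module R (S res k n)
  | 0, n => inferInstanceAs (Module R (G res (n+1)))
  | k+1, 0 => inferInstanceAs (Module R (bb res k))
  | k+1, n+1 => SMod k n

noncomputable def dS : ∀ k n, S res (k+1) n →ₗ[R] S res k n
  | 0, 0 => delta res 0
  | 0, n+1 => delta res (n+1)
  | k+1, 0 => dbb res k
  | k+1, n+1 => dS k n

example (n k : ℕ) : S res (k+1) (n+1) = S res k n := rfl
example (n : ℕ) : S res 0 n = G res (n+1) := rfl
example (n k : ℕ) : dS res (k+1) (n+1) = dS res k n := rfl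
example (n : ℕ) : dS res 0 (n+1) = delta res (n+1) := rfl
example : dS res 0 0 = delta res 0 := rfl

lemma exact_delta_mkQ (n : ℕ) :
    Function.Exact (delta res n) (LinearMap.range (delta res n)).mkQ :=
  LinearMap.exact_iff.2 (by rw [Submodule.ker_mkQ])

lemma exact_dS0 (n : ℕ) :
    Function.Exact (dS res 0 n) (LinearMap.range (delta res n)).mkQ := by
  cases n with
  | zero => exact exact_delta_mkQ res 0
  | succ n => exact exact_delta_mkQ res (n+1)

lemma exact_dbb0_delta0 :
    Function.Exact (dbb res 0) (delta res 0) := by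
  show Function.Exact ((LinearMap.ker (delta res 0)).subtype ∘ₗ qe R (KK res) 0) (delta res 0)
  erw [LinearMap.exact_iff,LinearMap.range_comp, LinearMap.range_eq_top.2 (qe_surj R (KK res) 0),
    Submodule.map_top, Submodule.range_subtype]

lemma exact_dbb1_dbb0 :
    Function.Exact (dbb res 1) (dbb res 0) := by
  show Function.Exact (qd R (KK res) 0) ((LinearMap.ker (delta res 0)).subtype ∘ₗ qe R (KK res) 0)
  erw [LinearMap.exact_iff,LinearMap.ker_comp, Submodule.ker_subtype, Submodule.comap_bot, range_qd]
  rfl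

lemma exact_dS_succ (hdelta : ∀ n, Function.Exact (delta res n) (delta res (n+1))) :
    ∀ k n, Function.Exact (dS res (k+1) n) (dS res k n)
  | 0, 0 => exact_dbb0_delta0 res
  | 0, n+1 => by
    cases n with
    | zero => exact hdelta 0
    | succ n => exact hdelta (n+1)
  | k+1, 0 => by
    cases k with
    | zero => exact exact_dbb1_dbb0 res
    | succ k => exact exact_qd_qd R (KK res) k
  | k+1, n+1 => exact_dS_succ hdelta k n

lemma proj_G (n : ℕ) : Projective (ModuleCat.of R (G res n)) := by
  haveI := res.free n
  haveI := res.finite n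
  exact projective_of_module_free _

lemma proj_S : ∀ k n, Projective (ModuleCat.of R (S res k n))
  | 0, n => proj_G res (n+1)
  | k+1, 0 => by
    cases k with
    | zero => exact proj_G res 0
    | succ k => exact proj_qmod R (KK res) k
  | k+1, n+1 => proj_S k n

lemma exact_delta_succ
    (hext : ∀ i : ℕ, 1 ≤ i → Subsingleton (extMod R i M R)) (n : ℕ) :
    Function.Exact (delta res n) (delta res (n+1)) := by
  haveI : ∀ k, Projective (ModuleCat.of R (res.F k)) := fun k => by
    haveI := res.free k
    exact projective_of_module_free _
  have h := exact_lcomp_of_subsingleton_ext res.F res.d res.ε res.exact_at_zero res.exact_at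
    (fun k => inferInstance) res.surj R n (hext (n+1) (by omega))
  exact h

/-- The one-step shift isomorphism for transposes of syzygies. -/
noncomputable def stepIso
    (hext : ∀ i : ℕ, 1 ≤ i → Subsingleton (extMod R i M R))
    (N : Type) [AddCommGroup N] [Module R N] (n m : ℕ) :
    ((Ext R (ModuleCat R) (m+1)).obj
      (Opposite.op (ModuleCat.of R (res.trSyzygy n)))).obj (ModuleCat.of R N) ≅
    ((Ext R (ModuleCat R) (m+2)).obj
      (Opposite.op (ModuleCat.of R (res.trSyzygy (n+1))))).obj (ModuleCat.of R N) :=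
  extShiftIso (A := res.trSyzygy n) (B := res.trSyzygy (n+1))
    (fun k => S res k (n+1)) (fun k => dS res k (n+1))
    ((LinearMap.range (delta res (n+1))).mkQ)
    (exact_dS0 res (n+1))
    (fun k => exact_dS_succ res (exact_delta_succ res hext) k (n+1))
    (fun k => proj_S res k (n+1))
    (Submodule.mkQ_surjective (LinearMap.range (delta res (n+1))))
    ((LinearMap.range (delta res n)).mkQ)
    (exact_dS0 res n)
    (Submodule.mkQ_surjective (LinearMap.range (delta res n)))
    N m

lemma chainIso (hext : ∀ i : ℕ, 1 ≤ i → Subsingleton (extMod R i M R))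
    (N : Type) [AddCommGroup N] [Module R N] :
    ∀ (v n m : ℕ),
      Nonempty ((extMod R (m+1) (res.trSyzygy n) N) ≃ₗ[R]
        extMod R (m+1+v) (res.trSyzygy (n+v)) N)
  | 0, n, m => ⟨LinearEquiv.refl _ _⟩
  | v+1, n, m => by
    obtain ⟨e⟩ := chainIso hext N v n m
    have h : m+1+v = m+v+1 := by omega
    rw [h] at e
    have h2 : m+1+(v+1) = m+v+2 := by omega
    rw [h2]
    exact ⟨e.trans (stepIso res hext N (n+v) (m+v)).toLinearEquiv⟩

end Splice
end ExtShiftAux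

/-- If `Ext^i_R(M, R) = 0` for all `i ≥ 1`, then for all integers `u ≥ v ≥ 1` and all
`j ≥ 1` one has `Ext^j_R(Tr Ω^{u-v} M, N) ≅ Ext^{j+v}_R(Tr Ω^u M, N)`. -/
theorem ext_trSyzygy_shift_iso_of_ext_vanishing
    (R : Type) [CommRing R] [IsNoetherianRing R] [IsLocalRing R]
    (M N : Type) [AddCommGroup M] [Module R M] [AddCommGroup N] [Module R N]
    [Module.Finite R M] [Module.Finite R N]
    (res : FiniteFreeResolution R M)
    (hext : ∀ i : ℕ, 1 ≤ i → Subsingleton (extMod R i M R)) :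
    ∀ u v j : ℕ, 1 ≤ v → v ≤ u → 1 ≤ j →
      Nonempty (extMod R j (res.trSyzygy (u - v)) N ≃ₗ[R]
        extMod R (j + v) (res.trSyzygy u) N) := by
  intro u v j _ hvu hj
  obtain ⟨m, rfl⟩ : ∃ m, j = m + 1 := ⟨j - 1, by omega⟩
  obtain ⟨e⟩ := ExtShiftAux.chainIso res hext N v (u - v) m
  rw [Nat.sub_add_cancel hvu] at e
  exact ⟨e⟩
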